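/- (Quantitative stability of nondegeneracy) Let M be a d-dimensional C^2 submanifold of ℝ^n and let C ⊆ M be a compact subset contained in a C^2 multi-valued graph with respect to the coordinate projection onto the coordinates indexed by σ(1) < … < σ(d). Let h : M → ℝ be a C^2 function with no degenerate critical point on C, and suppose K, L > 0 satisfy: Σ_{j=1}^d |D_{σ(j)}h| + |det(D_{σ(j1)}D_{σ(j2)}h)_{1≤j1,j2≤d}| > K on C, and |D_{σ(j1)}D_{σ(j2)}h| < L on C for all j1, j2. Let ε > 0 satisfy d!((L+ε)^d − L^d) + dε < K. Then every C^2 function g : M → ℝ with |D_{σ(j)}(g−h)| < ε and |D_{σ(j1)}D_{σ(j2)}(g−h)| < ε on C for all j, j1, j2 satisfies Σ_{j=1}^d |D_{σ(j)}g| + |det(D_{σ(j1)}D_{σ(j2)}g)_{1≤j1,j2≤d}| > 0 everywhere on C; consequently g has no degenerate critical point on C. -/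

import Mathlib

open FirstOrder Filter Topology

namespace DMorse

/-- A subset of `ℝ^n` is definable with parameters from `ℝ` in the `L`-structure `ℝ`. -/
def Def (L : FirstOrder.Language) [L.Structure ℝ] (n : ℕ) (s : Set (Fin n → ℝ)) : Prop :=
  Set.Definable (Set.univ : Set ℝ) L s

/-- The `L`-structure on `ℝ` expands the real ordered field: the graphs of addition and
multiplication and the order relation are definable. -/
def ExpandsRealOrderedField (L : FirstOrder.Language) [L.Structure ℝ] : Prop :=
  Def L 3 {v | v 0 + v 1 = v 2} ∧ Def L 3 {v | v 0 * v 1 = v 2} ∧ Def L 2 {v | v 0 < v 1}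

/-- A discrete subset of `ℝ`: every point is isolated. -/
def DiscreteSubset (s : Set ℝ) : Prop :=
  ∀ x ∈ s, ∃ ε > (0 : ℝ), ∀ y ∈ s, |y - x| < ε → y = x

/-- d-minimality: for every definable `A ⊆ ℝ^(m+1)` there is `N` such that each fiber either has
nonempty interior or is a union of at most `N` discrete sets. -/
def DMinimal (L : FirstOrder.Language) [L.Structure ℝ] : Prop :=
  ∀ (m : ℕ) (A : Set (Fin (m + 1) → ℝ)), Def L (m + 1) A →
    ∃ N : ℕ, ∀ x : Fin m → ℝ,
      (interior {y : ℝ | Fin.snoc x y ∈ A}).Nonempty ∨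
      ∃ t : Fin N → Set ℝ, {y : ℝ | Fin.snoc x y ∈ A} = ⋃ i, t i ∧ ∀ i, DiscreteSubset (t i)

/-- `f` is a `C^r` map on `S` (`C^0` meaning continuous; for `r ≥ 1` it locally extends to
ambient `C^r` maps, which for a `C^r` submanifold `S` is equivalent to being `C^r` in charts). -/
def CrOn {E F : Type*} [NormedAddCommGroup E] [NormedSpace ℝ E]
    [NormedAddCommGroup F] [NormedSpace ℝ F] (r : ℕ) (S : Set E) (f : E → F) : Prop :=
  ContinuousOn f S ∧
  (1 ≤ r → ∀ x ∈ S, ∃ U : Set E, IsOpen U ∧ x ∈ U ∧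
    ∃ g : E → F, ContDiffOn ℝ r g U ∧ Set.EqOn g f (S ∩ U))

/-- The graph of a real-valued function on `M ⊆ ℝ^n`, as a subset of `ℝ^(n+1)`. -/
def graphFun (n : ℕ) (M : Set (Fin n → ℝ)) (f : (Fin n → ℝ) → ℝ) : Set (Fin (n + 1) → ℝ) :=
  {v | (fun i : Fin n => v i.castSucc) ∈ M ∧ v (Fin.last n) = f fun i : Fin n => v i.castSucc}

/-- A function `M → ℝ` is definable if its graph is definable. -/
def DefFun (L : FirstOrder.Language) [L.Structure ℝ] (n : ℕ) (M : Set (Fin n → ℝ))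
    (f : (Fin n → ℝ) → ℝ) : Prop :=
  Def L (n + 1) (graphFun n M f)

/-- The graph of a map `S → ℝ^k`, `S ⊆ ℝ^m`, as a subset of `ℝ^(m+k)`. -/
def graphMap (m k : ℕ) (S : Set (Fin m → ℝ)) (f : (Fin m → ℝ) → Fin k → ℝ) :
    Set (Fin (m + k) → ℝ) :=
  {v | (fun i : Fin m => v (Fin.castAdd k i)) ∈ S ∧
       (fun j : Fin k => v (Fin.natAdd m j)) = f fun i : Fin m => v (Fin.castAdd k i)}

/-- A map `S → ℝ^k` is definable if its graph is definable. -/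
def DefMap (L : FirstOrder.Language) [L.Structure ℝ] (m k : ℕ) (S : Set (Fin m → ℝ))
    (f : (Fin m → ℝ) → Fin k → ℝ) : Prop :=
  Def L (m + k) (graphMap m k S f)

/-- `Z` is a `C^r` submanifold of `ℝ^n` of dimension `k`: every point of `Z` has an ambient open
neighborhood `U` and a `C^r` diffeomorphism `φ : U → V` with `φ z = 0` flattening `Z` onto
`ℝ^k × {0}`. -/
def IsCrSubmanifold (r n k : ℕ) (Z : Set (Fin n → ℝ)) : Prop :=
  ∀ z ∈ Z, ∃ (U V : Set (Fin n → ℝ)) (φ ψ : (Fin n → ℝ) → Fin n → ℝ),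
    IsOpen U ∧ z ∈ U ∧ IsOpen V ∧ ContDiffOn ℝ r φ U ∧ ContDiffOn ℝ r ψ V ∧
    Set.MapsTo φ U V ∧ Set.MapsTo ψ V U ∧
    (∀ x ∈ U, ψ (φ x) = x) ∧ (∀ y ∈ V, φ (ψ y) = y) ∧
    φ z = 0 ∧ Z ∩ U = U ∩ φ ⁻¹' {y : Fin n → ℝ | ∀ i : Fin n, k ≤ (i : ℕ) → y i = 0}

/-- A definable `C^r` submanifold of `ℝ^n` of dimension `k`. -/
def IsDefCrSubmanifold (L : FirstOrder.Language) [L.Structure ℝ] (r n k : ℕ)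
    (Z : Set (Fin n → ℝ)) : Prop :=
  Def L n Z ∧ IsCrSubmanifold r n k Z

/-- Velocity vectors at `x` of differentiable curves passing through `x` inside `M`. -/
def curveDerivs (n : ℕ) (M : Set (Fin n → ℝ)) (x : Fin n → ℝ) : Set (Fin n → ℝ) :=
  {v | ∃ γ : ℝ → Fin n → ℝ, γ 0 = x ∧ (∀ᶠ t in 𝓝 (0 : ℝ), γ t ∈ M) ∧ HasDerivAt γ v 0}

/-- The tangent space of `M` at `x` (the span of velocity vectors of curves in `M` through `x`;
for a `C^1` submanifold this is the usual tangent space). -/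
def TangentAt (n : ℕ) (M : Set (Fin n → ℝ)) (x : Fin n → ℝ) : Submodule ℝ (Fin n → ℝ) :=
  Submodule.span ℝ (curveDerivs n M x)

/-- The euclidean inner product on `ℝ^n`. -/
def dot {n : ℕ} (u v : Fin n → ℝ) : ℝ := ∑ i, u i * v i

/-- `p` is the orthogonal projection of `v` onto the subspace `T`. -/
def IsOrthProjOnto {n : ℕ} (T : Submodule ℝ (Fin n → ℝ)) (v p : Fin n → ℝ) : Prop :=
  p ∈ T ∧ ∀ w ∈ T, dot (v - p) w = 0

/-- `c` is the derivative of `g` at `x` along the (tangent) vector `v`, computed along a curve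
inside `M`. -/
def HasDerivAlong (n : ℕ) (M : Set (Fin n → ℝ)) (g : (Fin n → ℝ) → ℝ) (x v : Fin n → ℝ)
    (c : ℝ) : Prop :=
  ∃ γ : ℝ → Fin n → ℝ, γ 0 = x ∧ (∀ᶠ t in 𝓝 (0 : ℝ), γ t ∈ M) ∧ HasDerivAt γ v 0 ∧
    HasDerivAt (g ∘ γ) c 0

/-- `D` is the function `D_j g` on `M`: at each `x ∈ M` its value is the derivative of `g` along
the orthogonal projection of the `j`-th standard basis vector onto the tangent space `T_x M`. -/
def IsDerivField (n : ℕ) (M : Set (Fin n → ℝ)) (g : (Fin n → ℝ) → ℝ) (j : Fin n)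
    (D : (Fin n → ℝ) → ℝ) : Prop :=
  ∀ x ∈ M, ∀ p : Fin n → ℝ, IsOrthProjOnto (TangentAt n M x) (Pi.single j 1) p →
    HasDerivAlong n M g x p (D x)

/-- `x` is a critical point of `f : M → ℝ`: the differential of `f` at `x` vanishes on `T_x M`,
i.e. the derivative of `f` along every differentiable curve in `M` through `x` vanishes. -/
def IsCriticalPt (n : ℕ) (M : Set (Fin n → ℝ)) (f : (Fin n → ℝ) → ℝ) (x : Fin n → ℝ) : Prop :=
  x ∈ M ∧ ∀ (γ : ℝ → Fin n → ℝ) (v : Fin n → ℝ), γ 0 = x → (∀ᶠ t in 𝓝 (0 : ℝ), γ t ∈ M) →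
    HasDerivAt γ v 0 → HasDerivAt (f ∘ γ) 0 0

/-- The `(i,j)` entry of the Hessian matrix of `g : ℝ^d → ℝ` at `t0`. -/
noncomputable def hessianEntry {d : ℕ} (g : (Fin d → ℝ) → ℝ) (t0 : Fin d → ℝ)
    (i j : Fin d) : ℝ :=
  iteratedFDeriv ℝ 2 g t0 ![Pi.single i 1, Pi.single j 1]

/-- `τ : W → ℝ^n` is a local `C^2` parametrization of `M` around `x`, with `τ t0 = x`. -/
def IsLocalParamAt (n d : ℕ) (M : Set (Fin n → ℝ)) (τ : (Fin d → ℝ) → Fin n → ℝ)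
    (W : Set (Fin d → ℝ)) (t0 : Fin d → ℝ) (x : Fin n → ℝ) : Prop :=
  IsOpen W ∧ t0 ∈ W ∧ τ t0 = x ∧ ContDiffOn ℝ 2 τ W ∧ Set.InjOn τ W ∧
    ∃ U : Set (Fin n → ℝ), IsOpen U ∧ x ∈ U ∧ τ '' W = M ∩ U

/-- `x` is a nondegenerate critical point of `f : M → ℝ` (`M` of dimension `d`): in some local
`C^2` parametrization `τ` around `x`, the Hessian of `f ∘ τ` is invertible. -/
def IsNondegCritPt (n d : ℕ) (M : Set (Fin n → ℝ)) (f : (Fin n → ℝ) → ℝ)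
    (x : Fin n → ℝ) : Prop :=
  IsCriticalPt n M f x ∧
    ∃ (τ : (Fin d → ℝ) → Fin n → ℝ) (W : Set (Fin d → ℝ)) (t0 : Fin d → ℝ),
      IsLocalParamAt n d M τ W t0 x ∧
      (Matrix.of fun i j : Fin d => hessianEntry (f ∘ τ) t0 i j).det ≠ 0

/-- `f` is a Morse function on the `d`-dimensional submanifold `M`. -/
def IsMorseOn (n d : ℕ) (M : Set (Fin n → ℝ)) (f : (Fin n → ℝ) → ℝ) : Prop :=
  ∀ x, IsCriticalPt n M f x → IsNondegCritPt n d M f x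

/-- `g` lies in the basic `C^2` neighborhood `V_{h,ε}`: `|g-h| < ε`, `|D_j(g-h)| < ε` and
`|D_{j1}D_{j2}(g-h)| < ε` on `M` for all `j, j1, j2`. -/
def InC2Ball (n : ℕ) (M : Set (Fin n → ℝ)) (h g : (Fin n → ℝ) → ℝ) (ε : ℝ) : Prop :=
  (∀ x ∈ M, |g x - h x| < ε) ∧
  ∃ (D1 : Fin n → (Fin n → ℝ) → ℝ) (D2 : Fin n → Fin n → (Fin n → ℝ) → ℝ),
    (∀ j, IsDerivField n M (fun x => g x - h x) j (D1 j)) ∧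
    (∀ j1 j2, IsDerivField n M (D1 j2) j1 (D2 j1 j2)) ∧
    (∀ j, ∀ x ∈ M, |D1 j x| < ε) ∧
    (∀ j1 j2, ∀ x ∈ M, |D2 j1 j2 x| < ε)

/-- A definable `C^2` function on `M`. -/
def DefC2Fun (L : FirstOrder.Language) [L.Structure ℝ] (n : ℕ) (M : Set (Fin n → ℝ))
    (f : (Fin n → ℝ) → ℝ) : Prop :=
  DefFun L n M f ∧ CrOn 2 M f

/-- The definable `C^2` topology on `D^2(M)`, generated by the basic neighborhoods `V_{h,ε}`. -/
def C2Topology (L : FirstOrder.Language) [L.Structure ℝ] (n : ℕ) (M : Set (Fin n → ℝ)) :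
    TopologicalSpace {f : (Fin n → ℝ) → ℝ // DefC2Fun L n M f} :=
  TopologicalSpace.generateFrom
    {S | ∃ (h : {f : (Fin n → ℝ) → ℝ // DefC2Fun L n M f}) (ε : ℝ), 0 < ε ∧
      S = {g | InC2Ball n M h.1 g.1 ε}}

/-- The coordinate projection `ℝ^n → ℝ^d` selecting the coordinates `σ 0, …, σ (d-1)`. -/
def coordProj {n d : ℕ} (σ : Fin d → Fin n) (x : Fin n → ℝ) : Fin d → ℝ := fun i => x (σ i)

/-- The open box with corners `a`, `b`. -/
def openBox {n : ℕ} (a b : Fin n → ℝ) : Set (Fin n → ℝ) := {y | ∀ i, a i < y i ∧ y i < b i}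

/-- The multi-valued graph condition at `x`: there is an open box `U ∋ x` and a definable `C^r`
section `τ : π(U) → ℝ^n` of the coordinate projection `π = coordProj σ` with
`M' ∩ U = τ(π(U))`. -/
def MVGraphPointAt (L : FirstOrder.Language) [L.Structure ℝ] (r n d : ℕ) (σ : Fin d → Fin n)
    (M' : Set (Fin n → ℝ)) (x : Fin n → ℝ) : Prop :=
  ∃ a b : Fin n → ℝ, x ∈ openBox a b ∧
    ∃ τ : (Fin d → ℝ) → Fin n → ℝ,
      CrOn r (coordProj σ '' openBox a b) τ ∧
      DefMap L d n (coordProj σ '' openBox a b) τ ∧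
      M' ∩ openBox a b = τ '' (coordProj σ '' openBox a b) ∧
      ∀ y ∈ coordProj σ '' openBox a b, coordProj σ (τ y) = y

/-- A definable `C^r` multi-valued graph with respect to the coordinate projection `coordProj σ`. -/
def IsMVGraph (L : FirstOrder.Language) [L.Structure ℝ] (r n d : ℕ) (σ : Fin d → Fin n)
    (M' : Set (Fin n → ℝ)) : Prop :=
  IsDefCrSubmanifold L r n d M' ∧ ∀ x ∈ M', MVGraphPointAt L r n d σ M' x

/-- The image of the differential `df_x : T_x M → ℝ^k` of `f : M → ℝ^k` at `x`. -/
def diffImage (m k : ℕ) (M : Set (Fin m → ℝ)) (f : (Fin m → ℝ) → Fin k → ℝ)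
    (x : Fin m → ℝ) : Submodule ℝ (Fin k → ℝ) :=
  Submodule.span ℝ
    {w | ∃ (γ : ℝ → Fin m → ℝ) (v : Fin m → ℝ), γ 0 = x ∧ (∀ᶠ t in 𝓝 (0 : ℝ), γ t ∈ M) ∧
      HasDerivAt γ v 0 ∧ HasDerivAt (f ∘ γ) w 0}

/-- The set of critical values of `f : M → ℝ^k`: images of points where `df_x` is not
surjective. -/
def criticalValues (m k : ℕ) (M : Set (Fin m → ℝ)) (f : (Fin m → ℝ) → Fin k → ℝ) :
    Set (Fin k → ℝ) :=
  f '' {x ∈ M | diffImage m k M f x ≠ ⊤}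




section Aux

open Filter Topology

lemma prod_sub_prod_bound {ι : Type*} (s : Finset ι) (a b : ι → ℝ) (L ε : ℝ)
    (hL : 0 ≤ L) (hε : 0 ≤ ε) (ha : ∀ i ∈ s, |a i| ≤ L) (hab : ∀ i ∈ s, |b i - a i| ≤ ε) :
    |∏ i ∈ s, b i - ∏ i ∈ s, a i| ≤ (L + ε) ^ s.card - L ^ s.card := by
  induction s using Finset.cons_induction with
  | empty => simp
  | cons i s his ih =>
    have hai : |a i| ≤ L := ha i (Finset.mem_cons_self i s)
    have hbi : |b i - a i| ≤ ε := hab i (Finset.mem_cons_self i s)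
    have hb : |b i| ≤ L + ε := by
      have := abs_sub_abs_le_abs_sub (b i) (a i)
      linarith [abs_nonneg (b i)]
    have hpa : |∏ j ∈ s, a j| ≤ L ^ s.card := by
      rw [Finset.abs_prod]
      calc ∏ j ∈ s, |a j| ≤ ∏ j ∈ s, L := by
            apply Finset.prod_le_prod (fun j _ => abs_nonneg _)
            intro j hj; exact ha j (Finset.mem_cons_of_mem hj)
        _ = L ^ s.card := by rw [Finset.prod_const]
    have ih' := ih (fun j hj => ha j (Finset.mem_cons_of_mem hj))
      (fun j hj => hab j (Finset.mem_cons_of_mem hj))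
    have hLk : (L:ℝ) ^ s.card ≤ (L + ε) ^ s.card := by
      apply pow_le_pow_left₀ hL (by linarith)
    rw [Finset.prod_cons, Finset.prod_cons, Finset.card_cons]
    have key : b i * ∏ j ∈ s, b j - a i * ∏ j ∈ s, a j
        = b i * (∏ j ∈ s, b j - ∏ j ∈ s, a j) + (b i - a i) * ∏ j ∈ s, a j := by ring
    rw [key]
    calc |b i * (∏ j ∈ s, b j - ∏ j ∈ s, a j) + (b i - a i) * ∏ j ∈ s, a j|
        ≤ |b i| * |∏ j ∈ s, b j - ∏ j ∈ s, a j| + |b i - a i| * |∏ j ∈ s, a j| := by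
          refine (abs_add_le _ _).trans ?_
          rw [abs_mul, abs_mul]
      _ ≤ (L + ε) * ((L + ε) ^ s.card - L ^ s.card) + ε * L ^ s.card := by
          apply add_le_add
          · exact mul_le_mul hb ih' (abs_nonneg _) (by linarith)
          · exact mul_le_mul hbi hpa (abs_nonneg _) hε
      _ ≤ (L + ε) ^ (s.card + 1) - L ^ (s.card + 1) := by
          rw [pow_succ, pow_succ]; nlinarith [pow_nonneg hL s.card]

lemma det_sub_det_bound (d : ℕ) (A B : Matrix (Fin d) (Fin d) ℝ) (L ε : ℝ)
    (hL : 0 ≤ L) (hε : 0 ≤ ε) (hA : ∀ i j, |A i j| ≤ L) (hB : ∀ i j, |B i j - A i j| ≤ ε) :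
    |B.det - A.det| ≤ (d.factorial : ℝ) * ((L + ε) ^ d - L ^ d) := by
  rw [Matrix.det_apply, Matrix.det_apply, ← Finset.sum_sub_distrib]
  refine (Finset.abs_sum_le_sum_abs _ _).trans ?_
  have : ∀ σ : Equiv.Perm (Fin d),
      |Equiv.Perm.sign σ • ∏ i, B (σ i) i - Equiv.Perm.sign σ • ∏ i, A (σ i) i|
        ≤ (L + ε) ^ d - L ^ d := by
    intro σ
    rw [← smul_sub]
    have h2 : |Equiv.Perm.sign σ • (∏ i, B (σ i) i - ∏ i, A (σ i) i)|
        = |∏ i, B (σ i) i - ∏ i, A (σ i) i| := by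
      rcases Int.units_eq_one_or (Equiv.Perm.sign σ) with h | h <;> simp [h, abs_sub_comm]
    rw [h2]
    have := prod_sub_prod_bound (Finset.univ : Finset (Fin d)) (fun i => A (σ i) i)
      (fun i => B (σ i) i) L ε hL hε (fun i _ => hA _ _) (fun i _ => hB _ _)
    simpa using this
  refine (Finset.sum_le_sum (fun σ _ => this σ)).trans ?_
  rw [Finset.sum_const, Finset.card_univ]
  simp [Fintype.card_perm]

lemma dot_add_right {n : ℕ} (u v w : Fin n → ℝ) : dot u (v + w) = dot u v + dot u w := by
  simp [dot, mul_add, Finset.sum_add_distrib]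

lemma dot_smul_right {n : ℕ} (c : ℝ) (u v : Fin n → ℝ) : dot u (c • v) = c * dot u v := by
  simp only [dot, Pi.smul_apply, smul_eq_mul, Finset.mul_sum]
  exact Finset.sum_congr rfl (fun i _ => by ring)

lemma dot_zero_right {n : ℕ} (u : Fin n → ℝ) : dot u 0 = 0 := by simp [dot]

lemma dot_comm {n : ℕ} (u v : Fin n → ℝ) : dot u v = dot v u := by
  simp [dot, mul_comm]

/-- The key uniqueness: a derivative along a curve is determined by an ambient differentiable
function agreeing with `f` on `M` near `x`. -/
lemma hasDerivAlong_eq {n : ℕ} {M : Set (Fin n → ℝ)} {f : (Fin n → ℝ) → ℝ}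
    {x v : Fin n → ℝ} {c : ℝ} (hc : HasDerivAlong n M f x v c)
    {U : Set (Fin n → ℝ)} {F : (Fin n → ℝ) → ℝ} (hU : IsOpen U) (hxU : x ∈ U)
    (hF : DifferentiableAt ℝ F x) (heq : ∀ y ∈ M ∩ U, f y = F y) :
    c = fderiv ℝ F x v := by
  obtain ⟨γ, hγ0, hγM, hγv, hγc⟩ := hc
  have hcont : ContinuousAt γ 0 := hγv.continuousAt
  have hγU : ∀ᶠ t in 𝓝 (0 : ℝ), γ t ∈ U := by
    have : U ∈ 𝓝 (γ 0) := hU.mem_nhds (by rwa [hγ0])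
    exact hcont this
  have hev : (f ∘ γ) =ᶠ[𝓝 (0:ℝ)] (F ∘ γ) := by
    filter_upwards [hγM, hγU] with t h1 h2
    exact heq _ ⟨h1, h2⟩
  have hF' : HasDerivAt (F ∘ γ) (fderiv ℝ F x v) 0 := by
    have hγv' : HasDerivAt γ v 0 := hγv
    have hFx : HasFDerivAt F (fderiv ℝ F x) (γ 0) := by rw [hγ0]; exact hF.hasFDerivAt
    exact hFx.comp_hasDerivAt 0 hγv'
  have hf' : HasDerivAt (F ∘ γ) c 0 := hγc.congr_of_eventuallyEq hev.symm
  exact hf'.unique hF'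


lemma dot_sum_right {n : ℕ} {ι' : Type*} (s : Finset ι') (u : Fin n → ℝ) (f : ι' → Fin n → ℝ) :
    dot u (∑ i ∈ s, f i) = ∑ i ∈ s, dot u (f i) := by
  simp only [dot, Finset.sum_apply, Finset.mul_sum]
  rw [Finset.sum_comm]

lemma dot_sub_right {n : ℕ} (u v w : Fin n → ℝ) : dot u (v - w) = dot u v - dot u w := by
  simp [dot, mul_sub, Finset.sum_sub_distrib]

lemma contDiffOn_finset_prod {ι' : Type*} {N : ℕ} (s : Finset ι') (f : ι' → (Fin N → ℝ) → ℝ)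
    (t : Set (Fin N → ℝ)) (h : ∀ i ∈ s, ContDiffOn ℝ 1 (f i) t) :
    ContDiffOn ℝ 1 (fun y => ∏ i ∈ s, f i y) t := by
  induction s using Finset.cons_induction with
  | empty => simpa using contDiffOn_const
  | cons i s his ih =>
    simp only [Finset.prod_cons]
    exact (h i (Finset.mem_cons_self i s)).mul (ih (fun j hj => h j (Finset.mem_cons_of_mem hj)))

lemma contDiffOn_matrix_det {N : ℕ} {ι' : Type*} [Fintype ι'] [DecidableEq ι']
    (f : (Fin N → ℝ) → Matrix ι' ι' ℝ) (t : Set (Fin N → ℝ))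
    (h : ∀ i j, ContDiffOn ℝ 1 (fun y => f y i j) t) :
    ContDiffOn ℝ 1 (fun y => (f y).det) t := by
  have heq : (fun y => (f y).det)
      = fun y => ∑ σ : Equiv.Perm ι', (Equiv.Perm.sign σ : ℝ) * ∏ i, f y (σ i) i := by
    funext y; rw [Matrix.det_apply']
  rw [heq]
  exact ContDiffOn.sum fun σ _ => contDiffOn_const.mul
    (contDiffOn_finset_prod Finset.univ _ t (fun i _ => h (σ i) i))

lemma exists_proj_field (n d : ℕ) (M : Set (Fin n → ℝ)) (hM : IsCrSubmanifold 2 n d M)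
    (x : Fin n → ℝ) (hx : x ∈ M) :
    ∃ (U : Set (Fin n → ℝ)) (q : Fin n → (Fin n → ℝ) → (Fin n → ℝ)),
      IsOpen U ∧ x ∈ U ∧ (∀ j, ContDiffOn ℝ 1 (q j) U) ∧
      ∀ j : Fin n, ∀ y ∈ M ∩ U, IsOrthProjOnto (TangentAt n M y) (Pi.single j 1) (q j y) := by
  obtain ⟨U, V, φ, ψ, hU, hxU, hV, hφ, hψ, hmφ, hmψ, hinv1, hinv2, hφx, hflat⟩ := hM x hx
  set A : (Fin n → ℝ) → {l : Fin n // (l : ℕ) < d} → (Fin n → ℝ) :=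
    fun y l => fderiv ℝ ψ (φ y) (Pi.single l.1 1) with hA
  set Gm : (Fin n → ℝ) → Matrix {l : Fin n // (l : ℕ) < d} {l : Fin n // (l : ℕ) < d} ℝ :=
    fun y => Matrix.of (fun l m => dot (A y l) (A y m)) with hGm
  set bb : Fin n → (Fin n → ℝ) → {l : Fin n // (l : ℕ) < d} → ℝ :=
    fun j y m => dot (A y m) (Pi.single j 1) with hbb
  set q : Fin n → (Fin n → ℝ) → (Fin n → ℝ) :=
    fun j y => ∑ l, (((Gm y)⁻¹).mulVec (bb j y)) l • A y l with hq
  have hφd : ∀ y ∈ U, HasFDerivAt φ (fderiv ℝ φ y) y := fun y hy =>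
    ((hφ.differentiableOn (by norm_num)).differentiableAt (hU.mem_nhds hy)).hasFDerivAt
  have hψd : ∀ z ∈ V, HasFDerivAt ψ (fderiv ℝ ψ z) z := fun z hz =>
    ((hψ.differentiableOn (by norm_num)).differentiableAt (hV.mem_nhds hz)).hasFDerivAt
  have F4 : ∀ y ∈ U, ∀ w, fderiv ℝ φ y (fderiv ℝ ψ (φ y) w) = w := by
    intro y hy w
    have hψφy : ψ (φ y) = y := hinv1 y hy
    have hφd' : HasFDerivAt φ (fderiv ℝ φ y) (ψ (φ y)) := by rw [hψφy]; exact hφd y hy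
    have hcomp : HasFDerivAt (φ ∘ ψ) ((fderiv ℝ φ y).comp (fderiv ℝ ψ (φ y))) (φ y) :=
      hφd'.comp (φ y) (hψd _ (hmφ hy))
    have hev : φ ∘ ψ =ᶠ[𝓝 (φ y)] id := by
      filter_upwards [hV.mem_nhds (hmφ hy)] with z hz
      exact hinv2 z hz
    have hid : HasFDerivAt (id : (Fin n → ℝ) → (Fin n → ℝ))
        ((fderiv ℝ φ y).comp (fderiv ℝ ψ (φ y))) (φ y) :=
      hcomp.congr_of_eventuallyEq hev.symm
    have huniq := hid.unique (hasFDerivAt_id (φ y))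
    exact DFunLike.congr_fun huniq w
  -- every basis column is a curve derivative
  have curve_mem : ∀ y ∈ M ∩ U, ∀ l : {l : Fin n // (l : ℕ) < d},
      A y l ∈ curveDerivs n M y := by
    rintro y ⟨hyM, hyU⟩ l
    set w : Fin n → ℝ := Pi.single l.1 1 with hwdef
    have h0 : (fun t : ℝ => φ y + t • w) 0 = φ y := by simp
    have hVev : ∀ᶠ t in 𝓝 (0:ℝ), (φ y + t • w) ∈ V := by
      have hc : Continuous fun t : ℝ => φ y + t • w := by continuity
      have ht : Filter.Tendsto (fun t : ℝ => φ y + t • w) (𝓝 0) (𝓝 (φ y)) := by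
        simpa using hc.tendsto 0
      exact ht (hV.mem_nhds (hmφ hyU))
    have hyflat : ∀ i : Fin n, d ≤ (i : ℕ) → φ y i = 0 := by
      have : y ∈ U ∩ φ ⁻¹' {z : Fin n → ℝ | ∀ i : Fin n, d ≤ (i : ℕ) → z i = 0} := by
        rw [← hflat]; exact ⟨hyM, hyU⟩
      exact this.2
    refine ⟨fun t => ψ (φ y + t • w), ?_, ?_, ?_⟩
    · simp only [zero_smul, add_zero]; exact hinv1 y hyU
    · filter_upwards [hVev] with t ht
      have hU1 : ψ (φ y + t • w) ∈ U := hmψ ht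
      have hφψ : φ (ψ (φ y + t • w)) = φ y + t • w := hinv2 _ ht
      have hmem : ψ (φ y + t • w)
          ∈ U ∩ φ ⁻¹' {z : Fin n → ℝ | ∀ i : Fin n, d ≤ (i : ℕ) → z i = 0} := by
        refine ⟨hU1, ?_⟩
        have : ∀ i : Fin n, d ≤ (i : ℕ) → (φ y + t • w) i = 0 := by
          intro i hi
          have hne : i ≠ l.1 := by
            intro hc
            have : (i : ℕ) = (l.1 : ℕ) := by rw [hc]
            have := l.2
            omega
          simp only [Pi.add_apply, Pi.smul_apply, smul_eq_mul, hwdef]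
          rw [hyflat i hi, Pi.single_eq_of_ne hne]
          ring
        intro i hi
        show φ (ψ (φ y + t • w)) i = 0
        rw [hφψ]
        exact this i hi
      rw [← hflat] at hmem
      exact hmem.1
    · have hcurve : HasDerivAt (fun t : ℝ => φ y + t • w) w 0 := by
        simpa using ((hasDerivAt_id (0:ℝ)).smul_const w).const_add (φ y)
      have hF : HasFDerivAt ψ (fderiv ℝ ψ (φ y)) ((fun t : ℝ => φ y + t • w) 0) := by
        rw [h0]; exact hψd _ (hmφ hyU)
      exact hF.comp_hasDerivAt 0 hcurve
  have span_le_tangent : ∀ y ∈ M ∩ U,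
      Submodule.span ℝ (Set.range (A y)) ≤ TangentAt n M y := by
    intro y hy
    apply Submodule.span_le.2
    rintro _ ⟨l, rfl⟩
    exact Submodule.subset_span (curve_mem y hy l)
  have tangent_le_span : ∀ y ∈ M ∩ U,
      TangentAt n M y ≤ Submodule.span ℝ (Set.range (A y)) := by
    rintro y ⟨hyM, hyU⟩
    apply Submodule.span_le.2
    rintro v ⟨γ, hγ0, hγM, hγv⟩
    have hγU : ∀ᶠ t in 𝓝 (0:ℝ), γ t ∈ U := by
      have : U ∈ 𝓝 (γ 0) := by rw [hγ0]; exact hU.mem_nhds hyU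
      exact hγv.continuousAt this
    have hγMU : ∀ᶠ t in 𝓝 (0:ℝ), γ t ∈ M ∩ U := hγM.and hγU
    set u : Fin n → ℝ := fderiv ℝ φ y v with hu
    have hφγ : HasDerivAt (fun t => φ (γ t)) u 0 := by
      have hFy : HasFDerivAt φ (fderiv ℝ φ y) (γ 0) := by rw [hγ0]; exact hφd y hyU
      exact hFy.comp_hasDerivAt 0 hγv
    have hui : ∀ i : Fin n, d ≤ (i:ℕ) → u i = 0 := by
      intro i hi
      have hcomp : HasDerivAt (fun t => φ (γ t) i) (u i) 0 := by
        have := (ContinuousLinearMap.proj (R := ℝ) (φ := fun _ : Fin n => ℝ)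
          i).hasFDerivAt.comp_hasDerivAt 0 hφγ
        exact this
      have hzero : (fun t => φ (γ t) i) =ᶠ[𝓝 (0:ℝ)] fun _ => (0:ℝ) := by
        filter_upwards [hγMU] with t ht
        have hmem : γ t ∈ U ∩ φ ⁻¹' {z : Fin n → ℝ | ∀ i : Fin n, d ≤ (i : ℕ) → z i = 0} := by
          rw [← hflat]; exact ht
        exact hmem.2 i hi
      have h0' : HasDerivAt (fun _ : ℝ => (0:ℝ)) (u i) 0 :=
        hcomp.congr_of_eventuallyEq hzero.symm
      exact h0'.unique (hasDerivAt_const 0 0)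
    have hvψ : fderiv ℝ ψ (φ y) u = v := by
      have hFz : HasFDerivAt ψ (fderiv ℝ ψ (φ y)) ((fun t => φ (γ t)) 0) := by
        change HasFDerivAt ψ (fderiv ℝ ψ (φ y)) (φ (γ 0))
        rw [hγ0]
        exact hψd _ (hmφ hyU)
      have hcomp : HasDerivAt (fun t => ψ (φ (γ t))) (fderiv ℝ ψ (φ y) u) 0 :=
        hFz.comp_hasDerivAt 0 hφγ
      have hev : (fun t => ψ (φ (γ t))) =ᶠ[𝓝 (0:ℝ)] γ := by
        filter_upwards [hγU] with t ht
        exact hinv1 _ ht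
      exact (hcomp.congr_of_eventuallyEq hev.symm).unique hγv
    have husum : u = ∑ l : Fin n, u l • (Pi.single l 1 : Fin n → ℝ) := by
      funext i
      simp [Finset.sum_apply, Pi.single_apply]
    have hsum : v = ∑ l : Fin n, u l • fderiv ℝ ψ (φ y) (Pi.single l 1) := by
      rw [← hvψ]
      conv_lhs => rw [husum]
      rw [map_sum]
      exact Finset.sum_congr rfl fun l _ => by rw [map_smul]
    rw [hsum]
    apply Submodule.sum_mem
    intro l _
    by_cases hl : (l:ℕ) < d
    · exact Submodule.smul_mem _ _ (Submodule.subset_span ⟨⟨l, hl⟩, rfl⟩)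
    · rw [hui l (le_of_not_gt hl), zero_smul]
      exact Submodule.zero_mem _
  have hinj : ∀ y ∈ M ∩ U, ∀ c : {l : Fin n // (l : ℕ) < d} → ℝ,
      (∑ l, c l • A y l) = 0 → ∀ l, c l = 0 := by
    rintro y ⟨hyM, hyU⟩ c hc l0
    have happ : fderiv ℝ φ y (∑ l, c l • A y l) = 0 := by rw [hc]; simp
    rw [map_sum] at happ
    have hsingle : (∑ l : {l : Fin n // (l : ℕ) < d}, c l • (Pi.single l.1 1 : Fin n → ℝ)) = 0 := by
      rw [← happ]
      refine Finset.sum_congr rfl fun l _ => ?_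
      rw [map_smul, F4 y hyU (Pi.single l.1 1)]
    have heval := congrFun hsingle l0.1
    simp only [Finset.sum_apply, Pi.smul_apply, Pi.single_apply, smul_eq_mul,
      Pi.zero_apply] at heval
    rw [Finset.sum_eq_single l0] at heval
    · simpa using heval
    · intro b _ hb
      have hne : (l0.1 : Fin n) ≠ (b.1 : Fin n) := fun h => hb (Subtype.ext h.symm)
      simp [hne]
    · intro h; exact absurd (Finset.mem_univ l0) h
  have hdetne : ∀ y ∈ M ∩ U, (Gm y).det ≠ 0 := by
    intro y hy hdet
    obtain ⟨c, hc0, hcv⟩ := (Matrix.exists_mulVec_eq_zero_iff).2 hdet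
    set v : Fin n → ℝ := ∑ l, c l • A y l with hv
    have hAv : ∀ l, dot (A y l) v = 0 := by
      intro l
      rw [hv, dot_sum_right]
      have : ∀ m, dot (A y l) (c m • A y m) = Gm y l m * c m := by
        intro m; rw [dot_smul_right]; simp only [hGm, Matrix.of_apply]; ring
      rw [Finset.sum_congr rfl fun m _ => this m]
      have : (Gm y).mulVec c l = 0 := by rw [hcv]; rfl
      rw [← this]
      rfl
    have hdotv : dot v v = 0 := by
      rw [dot_comm, hv, dot_sum_right]
      apply Finset.sum_eq_zero
      intro l _
      rw [dot_smul_right, dot_comm, ← hv, hAv l]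
      ring
    have hv0 : v = 0 := by
      have hsq : ∀ i, v i * v i = 0 := by
        intro i
        have hnn : ∀ i ∈ Finset.univ, (0:ℝ) ≤ v i * v i := fun i _ => mul_self_nonneg _
        have := (Finset.sum_eq_zero_iff_of_nonneg hnn).1 hdotv i (Finset.mem_univ i)
        exact this
      funext i
      exact mul_self_eq_zero.1 (hsq i)
    have := hinj y hy c (by rw [← hv]; exact hv0)
    exact hc0 (funext this)
  have hproj : ∀ j : Fin n, ∀ y ∈ M ∩ U,
      IsOrthProjOnto (TangentAt n M y) (Pi.single j 1) (q j y) := by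
    intro j y hy
    have hGmul : Gm y * (Gm y)⁻¹ = 1 :=
      Matrix.mul_nonsing_inv _ (isUnit_iff_ne_zero.2 (hdetne y hy))
    constructor
    · apply span_le_tangent y hy
      apply Submodule.sum_mem
      intro l _
      exact Submodule.smul_mem _ _ (Submodule.subset_span ⟨l, rfl⟩)
    · intro w0 hw0
      have hw' : w0 ∈ Submodule.span ℝ (Set.range (A y)) := tangent_le_span y hy hw0
      have hkey : ∀ m, dot (Pi.single j 1 - q j y) (A y m) = 0 := by
        intro m
        have hqA : dot (A y m) (q j y) = bb j y m := by
          rw [hq]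
          rw [dot_sum_right]
          have hterm : ∀ l, dot (A y m) ((((Gm y)⁻¹).mulVec (bb j y)) l • A y l)
              = Gm y m l * (((Gm y)⁻¹).mulVec (bb j y)) l := by
            intro l; rw [dot_smul_right]; simp only [hGm, Matrix.of_apply]; ring
          rw [Finset.sum_congr rfl fun l _ => hterm l]
          have hstep : ∑ l, Gm y m l * (((Gm y)⁻¹).mulVec (bb j y)) l
              = ((Gm y) * (Gm y)⁻¹).mulVec (bb j y) m := by
            rw [← Matrix.mulVec_mulVec]
            rfl
          rw [hstep, hGmul, Matrix.one_mulVec]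
        rw [dot_comm, dot_sub_right, hqA]
        simp only [hbb]
        ring
      refine Submodule.span_induction ?_ ?_ ?_ ?_ hw'
      · rintro w1 ⟨m, rfl⟩
        exact hkey m
      · exact dot_zero_right _
      · intro a b _ _ ha hb
        rw [dot_add_right, ha, hb]; ring
      · intro r a _ ha
        rw [dot_smul_right, ha]; ring
  -- smoothness
  have hψ1 : ContDiffOn ℝ 1 (fderiv ℝ ψ) V := hψ.fderiv_of_isOpen hV (by norm_num)
  have hφ1 : ContDiffOn ℝ 1 φ U := hφ.of_le (by norm_num)
  have hAc : ∀ l, ContDiffOn ℝ 1 (fun y => A y l) U := by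
    intro l
    exact (hψ1.comp hφ1 hmφ).clm_apply contDiffOn_const
  have hAci : ∀ (l : {l : Fin n // (l : ℕ) < d}) (i : Fin n),
      ContDiffOn ℝ 1 (fun y => A y l i) U := by
    intro l i
    exact (ContinuousLinearMap.proj (R := ℝ) (φ := fun _ : Fin n => ℝ)
      i).contDiff.comp_contDiffOn (hAc l)
  have hGmc : ∀ l m, ContDiffOn ℝ 1 (fun y => Gm y l m) U := by
    intro l m
    have : (fun y => Gm y l m) = fun y => ∑ i : Fin n, A y l i * A y m i := rfl
    rw [this]
    exact ContDiffOn.sum fun i _ => (hAci l i).mul (hAci m i)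
  have hbc : ∀ (j : Fin n) (m : {l : Fin n // (l : ℕ) < d}),
      ContDiffOn ℝ 1 (fun y => bb j y m) U := by
    intro j m
    have : (fun y => bb j y m) = fun y => ∑ i : Fin n, A y m i * (Pi.single j 1 : Fin n → ℝ) i := rfl
    rw [this]
    exact ContDiffOn.sum fun i _ => (hAci m i).mul contDiffOn_const
  have hdetc : ContDiffOn ℝ 1 (fun y => (Gm y).det) U := contDiffOn_matrix_det Gm U hGmc
  have hU'open : IsOpen (U ∩ (fun y => (Gm y).det) ⁻¹' {(0:ℝ)}ᶜ) :=
    hdetc.continuousOn.isOpen_inter_preimage hU (isOpen_compl_iff.2 isClosed_singleton)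
  have hxU' : x ∈ U ∩ (fun y => (Gm y).det) ⁻¹' {(0:ℝ)}ᶜ :=
    ⟨hxU, hdetne x ⟨hx, hxU⟩⟩
  have hadjc : ∀ l m, ContDiffOn ℝ 1 (fun y => (Gm y).adjugate l m) U := by
    intro l m
    have : (fun y => (Gm y).adjugate l m)
        = fun y => ((Gm y).updateRow m (Pi.single l 1)).det := by
      funext y; rw [Matrix.adjugate_apply]
    rw [this]
    apply contDiffOn_matrix_det
    intro a b
    by_cases ham : a = m
    · simp only [Matrix.updateRow_apply, ham, if_true]
      exact contDiffOn_const
    · simp only [Matrix.updateRow_apply, ham, if_false]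
      exact hGmc a b
  have hqc : ∀ j : Fin n, ContDiffOn ℝ 1 (q j) (U ∩ (fun y => (Gm y).det) ⁻¹' {(0:ℝ)}ᶜ) := by
    intro j
    have hform : q j = fun y => ∑ l,
        (∑ m, ((Gm y).det)⁻¹ * ((Gm y).adjugate l m * bb j y m)) • A y l := by
      funext y
      simp only [hq]
      refine Finset.sum_congr rfl fun l _ => ?_
      congr 1
      show ((Gm y)⁻¹).mulVec (bb j y) l = _
      rw [Matrix.inv_def]
      simp only [Matrix.mulVec, dotProduct, Matrix.smul_apply, Ring.inverse_eq_inv',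
        smul_eq_mul]
      exact Finset.sum_congr rfl fun m _ => by ring
    rw [hform]
    apply ContDiffOn.sum
    intro l _
    apply ContDiffOn.fun_smul
    · apply ContDiffOn.sum
      intro m _
      apply ContDiffOn.mul
      · apply ContDiffOn.inv
        · exact hdetc.mono Set.inter_subset_left
        · rintro y ⟨hyU, hyne⟩
          exact hyne
      · exact ((hadjc l m).mono Set.inter_subset_left).mul
          ((hbc j m).mono Set.inter_subset_left)
    · exact (hAc l).mono Set.inter_subset_left
  refine ⟨U ∩ (fun y => (Gm y).det) ⁻¹' {(0:ℝ)}ᶜ, q, hU'open, hxU', hqc, ?_⟩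
  intro j y hy
  exact hproj j y ⟨hy.1, hy.2.1⟩


lemma derivField_loc (n d : ℕ) (M : Set (Fin n → ℝ)) (hM : IsCrSubmanifold 2 n d M)
    (f : (Fin n → ℝ) → ℝ) (j : Fin n) (Df : (Fin n → ℝ) → ℝ)
    (hf : CrOn 2 M f) (hDf : IsDerivField n M f j Df)
    (x : Fin n → ℝ) (hx : x ∈ M) :
    ∃ (U : Set (Fin n → ℝ)) (F : (Fin n → ℝ) → ℝ),
      IsOpen U ∧ x ∈ U ∧ ContDiffOn ℝ 1 F U ∧ ∀ y ∈ M ∩ U, Df y = F y := by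
  obtain ⟨Uq, q, hUq, hxUq, hqc, hqproj⟩ := exists_proj_field n d M hM x hx
  obtain ⟨Uf, hUf, hxUf, f', hf', heqf⟩ := hf.2 (by norm_num) x hx
  refine ⟨Uq ∩ Uf, fun y => fderiv ℝ f' y (q j y), hUq.inter hUf, ⟨hxUq, hxUf⟩, ?_, ?_⟩
  · have h1 : ContDiffOn ℝ 1 (fderiv ℝ f') Uf := hf'.fderiv_of_isOpen hUf (by norm_num)
    exact (h1.mono Set.inter_subset_right).clm_apply ((hqc j).mono Set.inter_subset_left)
  · rintro y ⟨hyM, hyUq, hyUf⟩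
    have hal : HasDerivAlong n M f y (q j y) (Df y) :=
      hDf y hyM (q j y) (hqproj j y ⟨hyM, hyUq⟩)
    have hdiff : DifferentiableAt ℝ f' y :=
      (hf'.differentiableOn (by norm_num)).differentiableAt (hUf.mem_nhds hyUf)
    exact hasDerivAlong_eq hal hUf hyUf hdiff (fun z hz => (heqf hz).symm)

lemma derivField_sub (n d : ℕ) (M : Set (Fin n → ℝ)) (hM : IsCrSubmanifold 2 n d M)
    (g h : (Fin n → ℝ) → ℝ) (j : Fin n) (Dg Dh Dφ : (Fin n → ℝ) → ℝ)
    (hg : CrOn 2 M g) (hh : CrOn 2 M h)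
    (hDg : IsDerivField n M g j Dg) (hDh : IsDerivField n M h j Dh)
    (hDφ : IsDerivField n M (fun x => g x - h x) j Dφ) :
    ∀ y ∈ M, Dφ y = Dg y - Dh y := by
  intro y hy
  obtain ⟨Uq, q, hUq, hyUq, hqc, hqproj⟩ := exists_proj_field n d M hM y hy
  obtain ⟨Ug, hUg, hyUg, g', hg', heqg⟩ := hg.2 (by norm_num) y hy
  obtain ⟨Uh, hUh, hyUh, h', hh', heqh⟩ := hh.2 (by norm_num) y hy
  have hproj := hqproj j y ⟨hy, hyUq⟩
  have hdg : DifferentiableAt ℝ g' y :=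
    (hg'.differentiableOn (by norm_num)).differentiableAt (hUg.mem_nhds hyUg)
  have hdh : DifferentiableAt ℝ h' y :=
    (hh'.differentiableOn (by norm_num)).differentiableAt (hUh.mem_nhds hyUh)
  have e1 : Dg y = fderiv ℝ g' y (q j y) :=
    hasDerivAlong_eq (hDg y hy _ hproj) hUg hyUg hdg (fun z hz => (heqg hz).symm)
  have e2 : Dh y = fderiv ℝ h' y (q j y) :=
    hasDerivAlong_eq (hDh y hy _ hproj) hUh hyUh hdh (fun z hz => (heqh hz).symm)
  have e3 : Dφ y = fderiv ℝ (fun z => g' z - h' z) y (q j y) := by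
    apply hasDerivAlong_eq (hDφ y hy _ hproj) (hUg.inter hUh) ⟨hyUg, hyUh⟩ (hdg.fun_sub hdh)
    rintro z ⟨hzM, hzg, hzh⟩
    rw [heqg ⟨hzM, hzg⟩, heqh ⟨hzM, hzh⟩]
  rw [e1, e2, e3, fderiv_fun_sub hdg hdh]
  simp

lemma derivField2_sub (n d : ℕ) (M : Set (Fin n → ℝ)) (hM : IsCrSubmanifold 2 n d M)
    (g h : (Fin n → ℝ) → ℝ) (j1 j2 : Fin n)
    (Dg Dh Dφ DDg DDh DDφ : (Fin n → ℝ) → ℝ)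
    (hg : CrOn 2 M g) (hh : CrOn 2 M h)
    (hDg : IsDerivField n M g j2 Dg) (hDh : IsDerivField n M h j2 Dh)
    (hDφ : IsDerivField n M (fun x => g x - h x) j2 Dφ)
    (hDDg : IsDerivField n M Dg j1 DDg) (hDDh : IsDerivField n M Dh j1 DDh)
    (hDDφ : IsDerivField n M Dφ j1 DDφ) :
    ∀ x ∈ M, DDφ x = DDg x - DDh x := by
  intro x hx
  obtain ⟨Uq, q, hUq, hxUq, hqc, hqproj⟩ := exists_proj_field n d M hM x hx
  obtain ⟨Ug, Fg, hUg, hxUg, hFg, heqg⟩ := derivField_loc n d M hM g j2 Dg hg hDg x hx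
  obtain ⟨Uh, Fh, hUh, hxUh, hFh, heqh⟩ := derivField_loc n d M hM h j2 Dh hh hDh x hx
  have hsub : ∀ y ∈ M, Dφ y = Dg y - Dh y :=
    derivField_sub n d M hM g h j2 Dg Dh Dφ hg hh hDg hDh hDφ
  have hproj := hqproj j1 x ⟨hx, hxUq⟩
  have hdg : DifferentiableAt ℝ Fg x :=
    (hFg.differentiableOn one_ne_zero).differentiableAt (hUg.mem_nhds hxUg)
  have hdh : DifferentiableAt ℝ Fh x :=
    (hFh.differentiableOn one_ne_zero).differentiableAt (hUh.mem_nhds hxUh)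
  have e1 : DDg x = fderiv ℝ Fg x (q j1 x) :=
    hasDerivAlong_eq (hDDg x hx _ hproj) hUg hxUg hdg heqg
  have e2 : DDh x = fderiv ℝ Fh x (q j1 x) :=
    hasDerivAlong_eq (hDDh x hx _ hproj) hUh hxUh hdh heqh
  have e3 : DDφ x = fderiv ℝ (fun z => Fg z - Fh z) x (q j1 x) := by
    apply hasDerivAlong_eq (hDDφ x hx _ hproj) (hUg.inter hUh) ⟨hxUg, hxUh⟩ (hdg.fun_sub hdh)
    rintro z ⟨hzM, hzg, hzh⟩
    rw [hsub z hzM, heqg z ⟨hzM, hzg⟩, heqh z ⟨hzM, hzh⟩]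
  rw [e1, e2, e3, fderiv_fun_sub hdg hdh]
  simp

lemma derivField_zero_at_crit (n d : ℕ) (M : Set (Fin n → ℝ)) (hM : IsCrSubmanifold 2 n d M)
    (g Dg : (Fin n → ℝ) → ℝ) (j : Fin n) (hDg : IsDerivField n M g j Dg)
    (x : Fin n → ℝ) (hcrit : IsCriticalPt n M g x) : Dg x = 0 := by
  obtain ⟨hx, hcrit'⟩ := hcrit
  obtain ⟨Uq, q, hUq, hxUq, hqc, hqproj⟩ := exists_proj_field n d M hM x hx
  obtain ⟨γ, hγ0, hγM, hγv, hγc⟩ := hDg x hx _ (hqproj j x ⟨hx, hxUq⟩)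
  exact hγc.unique (hcrit' γ _ hγ0 hγM hγv)


end Aux

/-- Multi-valued graph condition at a point (no definability requirement). -/
def MVGraphPointAtPlain (r n d : ℕ) (σ : Fin d → Fin n) (M' : Set (Fin n → ℝ))
    (x : Fin n → ℝ) : Prop :=
  ∃ a b : Fin n → ℝ, x ∈ openBox a b ∧
    ∃ τ : (Fin d → ℝ) → Fin n → ℝ,
      CrOn r (coordProj σ '' openBox a b) τ ∧
      M' ∩ openBox a b = τ '' (coordProj σ '' openBox a b) ∧
      ∀ y ∈ coordProj σ '' openBox a b, coordProj σ (τ y) = y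

/-- A `C^r` multi-valued graph with respect to `coordProj σ` (no definability requirement). -/
def IsMVGraphPlain (r n d : ℕ) (σ : Fin d → Fin n) (M' : Set (Fin n → ℝ)) : Prop :=
  IsCrSubmanifold r n d M' ∧ ∀ x ∈ M', MVGraphPointAtPlain r n d σ M' x

theorem statement11 (n d : ℕ) (M : Set (Fin n → ℝ)) (hM : IsCrSubmanifold 2 n d M)
    (σ : Fin d → Fin n) (hσ : StrictMono σ)
    (C G : Set (Fin n → ℝ)) (hCM : C ⊆ M) (hCcpt : IsCompact C)
    (hCG : C ⊆ G) (hGM : G ⊆ M) (hG : IsMVGraphPlain 2 n d σ G)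
    (h g : (Fin n → ℝ) → ℝ) (hh : CrOn 2 M h) (hg : CrOn 2 M g)
    (Dh : Fin n → (Fin n → ℝ) → ℝ) (hDh : ∀ j, IsDerivField n M h j (Dh j))
    (DDh : Fin n → Fin n → (Fin n → ℝ) → ℝ)
    (hDDh : ∀ j1 j2, IsDerivField n M (Dh j2) j1 (DDh j1 j2))
    (Dg : Fin n → (Fin n → ℝ) → ℝ) (hDg : ∀ j, IsDerivField n M g j (Dg j))
    (DDg : Fin n → Fin n → (Fin n → ℝ) → ℝ)
    (hDDg : ∀ j1 j2, IsDerivField n M (Dg j2) j1 (DDg j1 j2))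
    (Dφ : Fin n → (Fin n → ℝ) → ℝ)
    (hDφ : ∀ j, IsDerivField n M (fun x => g x - h x) j (Dφ j))
    (DDφ : Fin n → Fin n → (Fin n → ℝ) → ℝ)
    (hDDφ : ∀ j1 j2, IsDerivField n M (Dφ j2) j1 (DDφ j1 j2))
    (hnodeg : ∀ x ∈ C, IsCriticalPt n M h x →
      (Matrix.of fun j1 j2 : Fin d => DDh (σ j1) (σ j2) x).det ≠ 0)
    (K Lb ε : ℝ) (hK : 0 < K) (hLb : 0 < Lb) (hε : 0 < ε)
    (hKbound : ∀ x ∈ C,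
      K < (∑ j : Fin d, |Dh (σ j) x|) +
        |(Matrix.of fun j1 j2 : Fin d => DDh (σ j1) (σ j2) x).det|)
    (hLbound : ∀ x ∈ C, ∀ j1 j2 : Fin d, |DDh (σ j1) (σ j2) x| < Lb)
    (hεsmall : (d.factorial : ℝ) * ((Lb + ε) ^ d - Lb ^ d) + d * ε < K)
    (hd1 : ∀ j : Fin d, ∀ x ∈ C, |Dφ (σ j) x| < ε)
    (hd2 : ∀ j1 j2 : Fin d, ∀ x ∈ C, |DDφ (σ j1) (σ j2) x| < ε) :
    (∀ x ∈ C, 0 < (∑ j : Fin d, |Dg (σ j) x|) +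
        |(Matrix.of fun j1 j2 : Fin d => DDg (σ j1) (σ j2) x).det|) ∧
    ∀ x ∈ C, IsCriticalPt n M g x →
      (Matrix.of fun j1 j2 : Fin d => DDg (σ j1) (σ j2) x).det ≠ 0 := by
  have key1 : ∀ x ∈ C, ∀ j : Fin n, Dφ j x = Dg j x - Dh j x := fun x hx j =>
    derivField_sub n d M hM g h j (Dg j) (Dh j) (Dφ j) hg hh (hDg j) (hDh j) (hDφ j) x (hCM hx)
  have key2 : ∀ x ∈ C, ∀ j1 j2 : Fin n, DDφ j1 j2 x = DDg j1 j2 x - DDh j1 j2 x :=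
    fun x hx j1 j2 =>
    derivField2_sub n d M hM g h j1 j2 (Dg j2) (Dh j2) (Dφ j2) (DDg j1 j2) (DDh j1 j2)
      (DDφ j1 j2) hg hh (hDg j2) (hDh j2) (hDφ j2) (hDDg j1 j2) (hDDh j1 j2) (hDDφ j1 j2)
      x (hCM hx)
  have main : ∀ x ∈ C, 0 < (∑ j : Fin d, |Dg (σ j) x|) +
      |(Matrix.of fun j1 j2 : Fin d => DDg (σ j1) (σ j2) x).det| := by
    intro x hx
    have hsumg : (∑ j : Fin d, |Dh (σ j) x|) - (d : ℝ) * ε ≤ ∑ j : Fin d, |Dg (σ j) x| := by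
      have hterm : ∀ j : Fin d, |Dh (σ j) x| - ε ≤ |Dg (σ j) x| := by
        intro j
        have h0 := key1 x hx (σ j)
        have h3 : |Dh (σ j) x| ≤ |Dg (σ j) x| + |Dφ (σ j) x| := by
          have heq2 : Dh (σ j) x = Dg (σ j) x - Dφ (σ j) x := by linarith
          rw [heq2]
          exact abs_sub _ _
        linarith [le_of_lt (hd1 j x hx)]
      have := Finset.sum_le_sum (fun j (_ : j ∈ Finset.univ) => hterm j)
      rw [Finset.sum_sub_distrib, Finset.sum_const, Finset.card_univ, Fintype.card_fin,
        nsmul_eq_mul] at this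
      linarith
    have hdetb : |(Matrix.of fun j1 j2 : Fin d => DDg (σ j1) (σ j2) x).det -
        (Matrix.of fun j1 j2 : Fin d => DDh (σ j1) (σ j2) x).det|
        ≤ (d.factorial : ℝ) * ((Lb + ε) ^ d - Lb ^ d) := by
      apply det_sub_det_bound d _ _ Lb ε hLb.le hε.le
      · intro i j
        exact (hLbound x hx i j).le
      · intro i j
        have h2 := key2 x hx (σ i) (σ j)
        have h4 := (hd2 i j x hx).le
        simp only [Matrix.of_apply]
        calc |DDg (σ i) (σ j) x - DDh (σ i) (σ j) x| = |DDφ (σ i) (σ j) x| := by rw [h2]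
          _ ≤ ε := h4
    have hdetg : |(Matrix.of fun j1 j2 : Fin d => DDh (σ j1) (σ j2) x).det| -
        (d.factorial : ℝ) * ((Lb + ε) ^ d - Lb ^ d)
        ≤ |(Matrix.of fun j1 j2 : Fin d => DDg (σ j1) (σ j2) x).det| := by
      have habs := abs_sub_abs_le_abs_sub
        ((Matrix.of fun j1 j2 : Fin d => DDh (σ j1) (σ j2) x).det)
        ((Matrix.of fun j1 j2 : Fin d => DDg (σ j1) (σ j2) x).det)
      rw [abs_sub_comm] at habs
      linarith
    have hK := hKbound x hx
    linarith [hεsmall]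
  refine ⟨main, ?_⟩
  intro x hx hcrit
  have hDgzero : ∀ j : Fin d, Dg (σ j) x = 0 := fun j =>
    derivField_zero_at_crit n d M hM g (Dg (σ j)) (σ j) (hDg (σ j)) x hcrit
  have hpos := main x hx
  intro hdet0
  rw [hdet0, abs_zero, add_zero] at hpos
  have hsum0 : (∑ j : Fin d, |Dg (σ j) x|) = 0 :=
    Finset.sum_eq_zero fun j _ => by rw [hDgzero j, abs_zero]
  rw [hsum0] at hpos
  exact lt_irrefl _ hpos


end DMorse
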